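/- For every m ≥ 1, the two lower-triangular (m+1)×(m+1) integer matrices (γ_{i,k}^m)_{0 ≤ k ≤ i ≤ m} and (δ_{i,k}^m)_{0 ≤ k ≤ i ≤ m} are mutually inverse; that is, for all 0 ≤ l ≤ i ≤ m one has Σ_{k=l}^{i} γ_{i,k}^m · δ_{k,l}^m = 1 if i = l and 0 otherwise, and likewise Σ_{k=l}^{i} δ_{i,k}^m · γ_{k,l}^m = 1 if i = l and 0 otherwise. -/

import Mathlib

/-- `γ_{i,k}^m = Σ_{j=k}^{i} (-1)^{j-k} · mbinom(m, j-k) · binom(m-j, i-j)`, where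
`mbinom(n,k) = binom(n+k-1, k)` is the multichoose coefficient. -/
def gammaCoef (m i k : ℕ) : ℤ :=
  ∑ j ∈ Finset.Icc k i,
    (-1 : ℤ) ^ (j - k) * ((m + (j - k) - 1).choose (j - k) : ℤ) *
      ((m - j).choose (i - j) : ℤ)

/-- `δ_{i,k}^m = Σ_{j=k}^{i} (-1)^{j-k} · binom(m-k, j-k) · binom(m, i-j)`. -/
def deltaCoef (m i k : ℕ) : ℤ :=
  ∑ j ∈ Finset.Icc k i,
    (-1 : ℤ) ^ (j - k) * ((m - k).choose (j - k) : ℤ) * (m.choose (i - j) : ℤ)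


open Finset

/-- `A m d = Σ_{t=0}^d (-1)^t mbinom(m,t) C(m,d-t)` -/
def Afun (m d : ℕ) : ℤ :=
  ∑ t ∈ range (d+1), (-1:ℤ)^t * ((m + t - 1).choose t : ℤ) * (m.choose (d - t) : ℤ)

/-- `Bfun m d = Σ_{t=0}^d (-1)^t mbinom(m+1,t) C(m,d-t)` -/
def Bfun (m d : ℕ) : ℤ :=
  ∑ t ∈ range (d+1), (-1:ℤ)^t * ((m + t).choose t : ℤ) * (m.choose (d - t) : ℤ)

lemma Brec (m d : ℕ) : Bfun m (d+1) = Afun m (d+1) - Bfun m d := by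
  have h1 : Bfun m (d+1)
      = (∑ t ∈ range (d+1), (-1:ℤ)^(t+1) * ((m + (t+1)).choose (t+1) : ℤ)
          * (m.choose (d - t) : ℤ)) + (m.choose (d+1) : ℤ) := by
    rw [Bfun, sum_range_succ']
    simp
  have h2 : Afun m (d+1)
      = (∑ t ∈ range (d+1), (-1:ℤ)^(t+1) * ((m + t).choose (t+1) : ℤ)
          * (m.choose (d - t) : ℤ)) + (m.choose (d+1) : ℤ) := by
    rw [Afun, sum_range_succ']
    congr 1
    · apply sum_congr rfl; intro t ht
      congr 3
      omega
    · simp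
  rw [h1, h2, Bfun]
  rw [← sub_eq_iff_eq_add'] at *
  have key : ∀ t ∈ range (d+1),
      (-1:ℤ)^(t+1) * ((m + (t+1)).choose (t+1) : ℤ) * (m.choose (d - t) : ℤ)
      = (-1:ℤ)^(t+1) * ((m + t).choose (t+1) : ℤ) * (m.choose (d - t) : ℤ)
        - (-1:ℤ)^t * ((m + t).choose t : ℤ) * (m.choose (d - t) : ℤ) := by
    intro t _
    have : (m + (t+1)).choose (t+1) = (m+t).choose t + (m+t).choose (t+1) :=
      Nat.choose_succ_succ (m+t) t
    rw [this]
    push_cast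
    ring
  rw [sum_congr rfl key, sum_sub_distrib]
  ring

lemma Arec (m d : ℕ) : Afun (m+1) (d+1) = Afun m (d+1) := by
  have h1 : Afun (m+1) (d+1) = Bfun m (d+1) + Bfun m d := by
    have split : Afun (m+1) (d+1)
        = (∑ t ∈ range (d+1), (-1:ℤ)^t * ((m + t).choose t : ℤ)
            * ((m+1).choose (d+1-t) : ℤ))
          + (-1:ℤ)^(d+1) * ((m + (d+1)).choose (d+1) : ℤ) := by
      rw [Afun, sum_range_succ]
      congr 1
      · apply sum_congr rfl; intro t ht
        have e : m + 1 + t - 1 = m + t := by omega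
        rw [e]
      · have e : m + 1 + (d+1) - 1 = m + (d+1) := by omega
        rw [e]
        simp
    have pasc : ∀ t ∈ range (d+1),
        (-1:ℤ)^t * ((m + t).choose t : ℤ) * ((m+1).choose (d+1-t) : ℤ)
        = (-1:ℤ)^t * ((m + t).choose t : ℤ) * (m.choose (d+1-t) : ℤ)
          + (-1:ℤ)^t * ((m + t).choose t : ℤ) * (m.choose (d-t) : ℤ) := by
      intro t ht
      have htd : t ≤ d := by simpa [Nat.lt_succ_iff] using ht
      have : (m+1).choose (d+1-t) = m.choose (d-t) + m.choose (d+1-t) := by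
        have h' : d + 1 - t = (d - t) + 1 := by omega
        rw [h', Nat.choose_succ_succ]
      rw [this]
      push_cast
      ring
    rw [split, sum_congr rfl pasc, sum_add_distrib]
    have hB1 : Bfun m (d+1)
        = (∑ t ∈ range (d+1), (-1:ℤ)^t * ((m + t).choose t : ℤ) * (m.choose (d+1-t) : ℤ))
          + (-1:ℤ)^(d+1) * ((m + (d+1)).choose (d+1) : ℤ) := by
      rw [Bfun, sum_range_succ]
      simp
    rw [hB1, Bfun]
    ring
  rw [h1, Brec]
  ring

lemma key1 (m d : ℕ) : Afun m d = if d = 0 then 1 else 0 := by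
  induction m with
  | zero =>
    rw [Afun]
    rcases Nat.eq_zero_or_pos d with rfl | hd
    · simp
    · rw [if_neg hd.ne']
      have : ∀ t ∈ range (d+1),
          (-1:ℤ)^t * ((0 + t - 1).choose t : ℤ) * ((0:ℕ).choose (d - t) : ℤ) = 0 := by
        intro t ht
        rcases Nat.eq_zero_or_pos t with rfl | hT
        · simp [Nat.choose_eq_zero_of_lt hd]
        · have h0 : (t - 1).choose t = 0 := Nat.choose_eq_zero_of_lt (by omega)
          simp [h0]
      rw [sum_congr rfl this]
      simp
  | succ n ih =>
    rcases Nat.eq_zero_or_pos d with rfl | hd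
    · rw [Afun]; simp
    · obtain ⟨e, rfl⟩ := Nat.exists_eq_add_of_lt hd
      rw [zero_add] at *
      rw [Arec, ih]

lemma key2 (p n : ℕ) (h : n ≤ p) :
    ∑ u ∈ range (n+1), (-1:ℤ)^u * (p.choose u : ℤ) * ((p-u).choose (n-u) : ℤ)
      = if n = 0 then 1 else 0 := by
  have step : ∀ u ∈ range (n+1),
      (-1:ℤ)^u * (p.choose u : ℤ) * ((p-u).choose (n-u) : ℤ)
        = (p.choose n : ℤ) * ((-1:ℤ)^u * (n.choose u : ℤ)) := by
    intro u hu
    have hun : u ≤ n := by simpa [Nat.lt_succ_iff] using hu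
    have := Nat.choose_mul (n := p) hun
    have hcast : ((p.choose n : ℤ)) * (n.choose u : ℤ)
        = (p.choose u : ℤ) * ((p-u).choose (n-u) : ℤ) := by
      exact_mod_cast congrArg (fun x : ℕ => (x : ℤ)) this
    rw [show (p.choose n : ℤ) * ((-1:ℤ)^u * (n.choose u : ℤ))
        = (-1:ℤ)^u * ((p.choose n : ℤ) * (n.choose u : ℤ)) by ring, hcast]
    ring
  rw [sum_congr rfl step, ← mul_sum, Int.alternating_sum_range_choose]
  split <;> simp_all

namespace Stmt11Aux
open Finset Matrix

/-- Lower-triangular matrix with entries `C(m-j, i-j)`. -/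
def Bm (m : ℕ) : Matrix (Fin (m+1)) (Fin (m+1)) ℤ :=
  Matrix.of fun i j => if (j:ℕ) ≤ (i:ℕ) then ((m - (j:ℕ)).choose ((i:ℕ) - (j:ℕ)) : ℤ) else 0

/-- Toeplitz matrix with entries `(-1)^{j-k} mbinom(m, j-k)`. -/
def Tm (m : ℕ) : Matrix (Fin (m+1)) (Fin (m+1)) ℤ :=
  Matrix.of fun j k => if (k:ℕ) ≤ (j:ℕ) then
    (-1:ℤ)^((j:ℕ)-(k:ℕ)) * ((m + ((j:ℕ)-(k:ℕ)) - 1).choose ((j:ℕ)-(k:ℕ)) : ℤ) else 0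

/-- Toeplitz matrix with entries `C(m, i-j)`. -/
def Sm (m : ℕ) : Matrix (Fin (m+1)) (Fin (m+1)) ℤ :=
  Matrix.of fun i j => if (j:ℕ) ≤ (i:ℕ) then (m.choose ((i:ℕ)-(j:ℕ)) : ℤ) else 0

/-- Lower-triangular matrix with entries `(-1)^{j-k} C(m-k, j-k)`. -/
def Um (m : ℕ) : Matrix (Fin (m+1)) (Fin (m+1)) ℤ :=
  Matrix.of fun j k => if (k:ℕ) ≤ (j:ℕ) then
    (-1:ℤ)^((j:ℕ)-(k:ℕ)) * ((m - (k:ℕ)).choose ((j:ℕ)-(k:ℕ)) : ℤ) else 0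

lemma sum_range_to_Icc (m a b : ℕ) (hb : b ≤ m) (f : ℕ → ℤ)
    (hz : ∀ x ∈ range (m+1), x ∉ Icc a b → f x = 0) :
    ∑ k ∈ range (m+1), f k = ∑ k ∈ Icc a b, f k := by
  refine (sum_subset ?_ hz).symm
  intro x hx
  rw [mem_Icc] at hx
  rw [mem_range]
  omega

lemma gamma_eq (m : ℕ) (i k : Fin (m+1)) :
    (Bm m * Tm m) i k = gammaCoef m i k := by
  rw [Matrix.mul_apply]
  simp only [Bm, Tm, Matrix.of_apply]
  rw [Fin.sum_univ_eq_sum_range (fun j =>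
    (if j ≤ (i:ℕ) then ((m - j).choose ((i:ℕ) - j) : ℤ) else 0) *
    (if (k:ℕ) ≤ j then
      (-1:ℤ)^(j-(k:ℕ)) * ((m + (j-(k:ℕ)) - 1).choose (j-(k:ℕ)) : ℤ) else 0))]
  rw [sum_range_to_Icc m (k:ℕ) (i:ℕ) (by omega)]
  · rw [gammaCoef]
    apply sum_congr rfl
    intro j hj
    rw [mem_Icc] at hj
    rw [if_pos hj.2, if_pos hj.1]
    ring
  · intro x _ hx
    rw [mem_Icc] at hx
    by_cases h1 : x ≤ (i:ℕ)
    · have h2 : ¬ (k:ℕ) ≤ x := by omega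
      rw [if_neg h2, mul_zero]
    · rw [if_neg h1, zero_mul]

lemma delta_eq (m : ℕ) (i k : Fin (m+1)) :
    (Sm m * Um m) i k = deltaCoef m i k := by
  rw [Matrix.mul_apply]
  simp only [Sm, Um, Matrix.of_apply]
  rw [Fin.sum_univ_eq_sum_range (fun j =>
    (if j ≤ (i:ℕ) then (m.choose ((i:ℕ)-j) : ℤ) else 0) *
    (if (k:ℕ) ≤ j then
      (-1:ℤ)^(j-(k:ℕ)) * ((m - (k:ℕ)).choose (j-(k:ℕ)) : ℤ) else 0))]
  rw [sum_range_to_Icc m (k:ℕ) (i:ℕ) (by omega)]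
  · rw [deltaCoef]
    apply sum_congr rfl
    intro j hj
    rw [mem_Icc] at hj
    rw [if_pos hj.2, if_pos hj.1]
    ring
  · intro x _ hx
    rw [mem_Icc] at hx
    by_cases h1 : x ≤ (i:ℕ)
    · have h2 : ¬ (k:ℕ) ≤ x := by omega
      rw [if_neg h2, mul_zero]
    · rw [if_neg h1, zero_mul]

lemma TS (m : ℕ) : Tm m * Sm m = 1 := by
  ext j s
  rw [Matrix.mul_apply, Matrix.one_apply]
  simp only [Tm, Sm, Matrix.of_apply]
  rw [Fin.sum_univ_eq_sum_range (fun k =>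
    (if k ≤ (j:ℕ) then
      (-1:ℤ)^((j:ℕ)-k) * ((m + ((j:ℕ)-k) - 1).choose ((j:ℕ)-k) : ℤ) else 0) *
    (if (s:ℕ) ≤ k then (m.choose (k-(s:ℕ)) : ℤ) else 0))]
  by_cases hsj : (s:ℕ) ≤ (j:ℕ)
  · rw [sum_range_to_Icc m (s:ℕ) (j:ℕ) (by omega)]
    · set d := (j:ℕ) - (s:ℕ) with hd
      have hIcc : ∑ k ∈ Icc (s:ℕ) (j:ℕ),
          ((if k ≤ (j:ℕ) then
            (-1:ℤ)^((j:ℕ)-k) * ((m + ((j:ℕ)-k) - 1).choose ((j:ℕ)-k) : ℤ) else 0) *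
          (if (s:ℕ) ≤ k then (m.choose (k-(s:ℕ)) : ℤ) else 0))
          = ∑ u ∈ range (d+1),
            (-1:ℤ)^(d-u) * ((m + (d-u) - 1).choose (d-u) : ℤ) * (m.choose (d-(d-u)) : ℤ) := by
        rw [← Finset.Ico_add_one_right_eq_Icc, Finset.sum_Ico_eq_sum_range]
        have hn : (j:ℕ) + 1 - (s:ℕ) = d + 1 := by omega
        rw [hn]
        apply sum_congr rfl
        intro u hu
        rw [mem_range] at hu
        have h1 : (s:ℕ) + u ≤ (j:ℕ) := by omega
        have h2 : (s:ℕ) ≤ (s:ℕ) + u := by omega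
        rw [if_pos h1, if_pos h2]
        have e1 : (j:ℕ) - ((s:ℕ) + u) = d - u := by omega
        have e2 : (s:ℕ) + u - (s:ℕ) = d - (d - u) := by omega
        rw [e1, e2]
      have hrefl := Finset.sum_range_reflect
        (fun t => (-1:ℤ)^t * ((m + t - 1).choose t : ℤ) * (m.choose (d-t) : ℤ)) (d+1)
      simp only [Nat.add_sub_cancel] at hrefl
      rw [hIcc, hrefl]
      have hA := key1 m d
      rw [Afun] at hA
      rw [hA]
      have hjs : (j = s) ↔ (d = 0) := by
        constructor
        · intro h; have hval := congrArg Fin.val h; omega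
        · intro h; apply Fin.ext; omega
      by_cases h : d = 0
      · rw [if_pos h, if_pos (hjs.mpr h)]
      · rw [if_neg h, if_neg (fun hc => h (hjs.mp hc))]
    · intro x _ hx
      rw [mem_Icc] at hx
      by_cases h1 : x ≤ (j:ℕ)
      · have h2 : ¬ (s:ℕ) ≤ x := by omega
        rw [if_neg h2, mul_zero]
      · rw [if_neg h1, zero_mul]
  · have hz : ∀ k ∈ range (m+1),
        ((if k ≤ (j:ℕ) then
          (-1:ℤ)^((j:ℕ)-k) * ((m + ((j:ℕ)-k) - 1).choose ((j:ℕ)-k) : ℤ) else 0) *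
        (if (s:ℕ) ≤ k then (m.choose (k-(s:ℕ)) : ℤ) else 0)) = 0 := by
      intro k _
      by_cases h1 : k ≤ (j:ℕ)
      · have h2 : ¬ (s:ℕ) ≤ k := by omega
        rw [if_neg h2, mul_zero]
      · rw [if_neg h1, zero_mul]
    rw [sum_congr rfl hz, sum_const_zero]
    have hne : j ≠ s := by intro h; rw [h] at hsj; omega
    rw [if_neg hne]

lemma UB (m : ℕ) : Um m * Bm m = 1 := by
  ext s j
  rw [Matrix.mul_apply, Matrix.one_apply]
  simp only [Um, Bm, Matrix.of_apply]
  rw [Fin.sum_univ_eq_sum_range (fun k =>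
    (if k ≤ (s:ℕ) then
      (-1:ℤ)^((s:ℕ)-k) * ((m - k).choose ((s:ℕ)-k) : ℤ) else 0) *
    (if (j:ℕ) ≤ k then ((m - (j:ℕ)).choose (k-(j:ℕ)) : ℤ) else 0))]
  by_cases hjs : (j:ℕ) ≤ (s:ℕ)
  · rw [sum_range_to_Icc m (j:ℕ) (s:ℕ) (by omega)]
    · set n := (s:ℕ) - (j:ℕ) with hn
      set p := m - (j:ℕ) with hp
      have hnp : n ≤ p := by omega
      have hIcc : ∑ k ∈ Icc (j:ℕ) (s:ℕ),
          ((if k ≤ (s:ℕ) then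
            (-1:ℤ)^((s:ℕ)-k) * ((m - k).choose ((s:ℕ)-k) : ℤ) else 0) *
          (if (j:ℕ) ≤ k then ((m - (j:ℕ)).choose (k-(j:ℕ)) : ℤ) else 0))
          = ∑ u ∈ range (n+1),
            (-1:ℤ)^n * ((-1:ℤ)^u * (p.choose u : ℤ) * ((p-u).choose (n-u) : ℤ)) := by
        rw [← Finset.Ico_add_one_right_eq_Icc, Finset.sum_Ico_eq_sum_range]
        have hh : (s:ℕ) + 1 - (j:ℕ) = n + 1 := by omega
        rw [hh]
        apply sum_congr rfl
        intro u hu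
        rw [mem_range] at hu
        have h1 : (j:ℕ) + u ≤ (s:ℕ) := by omega
        have h2 : (j:ℕ) ≤ (j:ℕ) + u := by omega
        rw [if_pos h1, if_pos h2]
        have e1 : (s:ℕ) - ((j:ℕ) + u) = n - u := by omega
        have e2 : m - ((j:ℕ) + u) = p - u := by omega
        have e3 : (j:ℕ) + u - (j:ℕ) = u := by omega
        rw [e1, e2, e3]
        have esign : (-1:ℤ)^(n-u) = (-1:ℤ)^n * (-1:ℤ)^u := by
          have hnu : n + u = (n - u) + 2*u := by omega
          rw [← pow_add, hnu, pow_add, pow_mul]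
          simp
        rw [esign]
        ring
      rw [hIcc, ← mul_sum, key2 p n hnp]
      have hjs' : (s = j) ↔ (n = 0) := by
        constructor
        · intro h; have hval := congrArg Fin.val h; omega
        · intro h; apply Fin.ext; omega
      by_cases h : n = 0
      · rw [if_pos h, if_pos (hjs'.mpr h), h]
        norm_num
      · rw [if_neg h, if_neg (fun hc => h (hjs'.mp hc)), mul_zero]
    · intro x _ hx
      rw [mem_Icc] at hx
      by_cases h1 : x ≤ (s:ℕ)
      · have h2 : ¬ (j:ℕ) ≤ x := by omega
        rw [if_neg h2, mul_zero]
      · rw [if_neg h1, zero_mul]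
  · have hz : ∀ k ∈ range (m+1),
        ((if k ≤ (s:ℕ) then
          (-1:ℤ)^((s:ℕ)-k) * ((m - k).choose ((s:ℕ)-k) : ℤ) else 0) *
        (if (j:ℕ) ≤ k then ((m - (j:ℕ)).choose (k-(j:ℕ)) : ℤ) else 0)) = 0 := by
      intro k _
      by_cases h1 : k ≤ (s:ℕ)
      · have h2 : ¬ (j:ℕ) ≤ k := by omega
        rw [if_neg h2, mul_zero]
      · rw [if_neg h1, zero_mul]
    rw [sum_congr rfl hz, sum_const_zero]
    have hne : s ≠ j := by intro h; rw [h] at hjs; omega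
    rw [if_neg hne]

lemma gammaDelta (m : ℕ) :
    (Matrix.of fun i k : Fin (m+1) => gammaCoef m i k) *
    (Matrix.of fun i k : Fin (m+1) => deltaCoef m i k) = 1 := by
  have h1 : (Matrix.of fun i k : Fin (m+1) => gammaCoef m i k) = Bm m * Tm m := by
    ext i k; exact (gamma_eq m i k).symm
  have h2 : (Matrix.of fun i k : Fin (m+1) => deltaCoef m i k) = Sm m * Um m := by
    ext i k; exact (delta_eq m i k).symm
  rw [h1, h2]
  calc Bm m * Tm m * (Sm m * Um m) = Bm m * (Tm m * Sm m) * Um m := by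
        rw [Matrix.mul_assoc, Matrix.mul_assoc, Matrix.mul_assoc]
    _ = Bm m * Um m := by rw [TS m, Matrix.mul_one]
    _ = 1 := mul_eq_one_comm.mp (UB m)

lemma deltaGamma (m : ℕ) :
    (Matrix.of fun i k : Fin (m+1) => deltaCoef m i k) *
    (Matrix.of fun i k : Fin (m+1) => gammaCoef m i k) = 1 :=
  mul_eq_one_comm.mp (gammaDelta m)

lemma gamma_zero (m i k : ℕ) (h : i < k) : gammaCoef m i k = 0 := by
  rw [gammaCoef, Finset.Icc_eq_empty (by omega), sum_empty]

lemma delta_zero (m i k : ℕ) (h : i < k) : deltaCoef m i k = 0 := by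
  rw [deltaCoef, Finset.Icc_eq_empty (by omega), sum_empty]

end Stmt11Aux

/-- For `m ≥ 1`, the lower-triangular matrices `(γ_{i,k}^m)` and `(δ_{i,k}^m)` are mutually
inverse: for all `0 ≤ l ≤ i ≤ m`, `Σ_{k=l}^{i} γ_{i,k}^m δ_{k,l}^m = δ_{i,l}` and
`Σ_{k=l}^{i} δ_{i,k}^m γ_{k,l}^m = δ_{i,l}` (Kronecker delta). -/
theorem stmt11 (m : ℕ) (hm : 1 ≤ m) (i l : ℕ) (hl : l ≤ i) (hi : i ≤ m) :
    ((∑ k ∈ Finset.Icc l i, gammaCoef m i k * deltaCoef m k l)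
        = if i = l then 1 else 0) ∧
    ((∑ k ∈ Finset.Icc l i, deltaCoef m i k * gammaCoef m k l)
        = if i = l then 1 else 0) := by
  open Finset Stmt11Aux in
  (have hIfin : i < m + 1 := by omega
   have hLfin : l < m + 1 := by omega
   set I : Fin (m+1) := ⟨i, hIfin⟩ with hI
   set L : Fin (m+1) := ⟨l, hLfin⟩ with hL
   have hIL : (I = L) ↔ (i = l) := by
     constructor
     · intro h; exact congrArg Fin.val h
     · intro h; exact Fin.ext h
   constructor
   · have h1 : ∑ k ∈ Finset.Icc l i, gammaCoef m i k * deltaCoef m k l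
         = ∑ k ∈ Finset.range (m+1), gammaCoef m i k * deltaCoef m k l := by
       refine Finset.sum_subset ?_ ?_
       · intro x hx; rw [Finset.mem_Icc] at hx; rw [Finset.mem_range]; omega
       · intro x _ hx
         rw [Finset.mem_Icc] at hx
         by_cases hxl : l ≤ x
         · have hix : i < x := by omega
           rw [gamma_zero m i x hix, zero_mul]
         · rw [delta_zero m x l (by omega), mul_zero]
     rw [h1, ← Fin.sum_univ_eq_sum_range (fun k => gammaCoef m i k * deltaCoef m k l) (m+1)]
     have h2 : ∑ k : Fin (m+1), gammaCoef m i ↑k * deltaCoef m ↑k l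
         = ((Matrix.of fun a b : Fin (m+1) => gammaCoef m a b) *
            (Matrix.of fun a b : Fin (m+1) => deltaCoef m a b)) I L := by
       rw [Matrix.mul_apply]
       rfl
     rw [h2, gammaDelta m, Matrix.one_apply]
     by_cases h : i = l
     · rw [if_pos h, if_pos (hIL.mpr h)]
     · rw [if_neg h, if_neg (fun hc => h (hIL.mp hc))]
   · have h1 : ∑ k ∈ Finset.Icc l i, deltaCoef m i k * gammaCoef m k l
         = ∑ k ∈ Finset.range (m+1), deltaCoef m i k * gammaCoef m k l := by
       refine Finset.sum_subset ?_ ?_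
       · intro x hx; rw [Finset.mem_Icc] at hx; rw [Finset.mem_range]; omega
       · intro x _ hx
         rw [Finset.mem_Icc] at hx
         by_cases hxl : l ≤ x
         · have hix : i < x := by omega
           rw [delta_zero m i x hix, zero_mul]
         · rw [gamma_zero m x l (by omega), mul_zero]
     rw [h1, ← Fin.sum_univ_eq_sum_range (fun k => deltaCoef m i k * gammaCoef m k l) (m+1)]
     have h2 : ∑ k : Fin (m+1), deltaCoef m i ↑k * gammaCoef m ↑k l
         = ((Matrix.of fun a b : Fin (m+1) => deltaCoef m a b) *
            (Matrix.of fun a b : Fin (m+1) => gammaCoef m a b)) I L := by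
       rw [Matrix.mul_apply]
       rfl
     rw [h2, deltaGamma m, Matrix.one_apply]
     by_cases h : i = l
     · rw [if_pos h, if_pos (hIL.mpr h)]
     · rw [if_neg h, if_neg (fun hc => h (hIL.mp hc))])
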